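/- Let A be a backoff-complete topology over Σ, let p be an ε-companion distribution with induced distribution p*, and let c : Σ × Q → ℝ be nonnegative counts with c(x,q) = 0 whenever x ∉ L*[q]. Then Σ_{q∈Q} Σ_{x∈L*[q]} c(x,q)·log p*(x|q) = Σ_{q∈Q} [ Σ_{x∈L[q]} C(x,q)·log p(x|q) + C(φ,q)·log p(φ|q) − Σ_{q₀∈B₁(q)} C(φ,q₀)·log d(q₀,q) ]. -/
import Mathlib


open scoped BigOperators
open Classical

noncomputable section

variable {α : Type*} {Q : Type*}

/-- A backoff-complete topology over the alphabet `α` with states `Q`. -/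
structure BackoffTopology (α : Type*) (Q : Type*) where
  supp : Q → Finset α
  bo : Q → Option Q
  rank : Q → ℕ
  rank_lt : ∀ q q', bo q = some q' → rank q' < rank q
  supp_sub : ∀ q q', bo q = some q' → supp q ⊆ supp q'
  supp_ssub : ∀ q q', bo q = some q' → bo q' = none → supp q ⊂ supp q'

namespace BackoffTopology

/-- `iter n q` is the `n`-th state of the backoff chain of `q` (if it exists). -/
def iter (T : BackoffTopology α Q) : ℕ → Q → Option Q
  | 0, q => some q
  | n + 1, q => (T.iter n q).bind T.bo

/-- `L*[q]`: union of the label sets along the backoff chain of `q`. -/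
def suppStar (T : BackoffTopology α Q) (q : Q) : Set α :=
  {x | ∃ n q', T.iter n q = some q' ∧ x ∈ T.supp q'}

/-- `q^x`: the first state of the backoff chain of `q` whose label set contains `x`. -/
def qx (T : BackoffTopology α Q) (q : Q) (x : α) : Option Q :=
  if h : ∃ n, ∃ q', T.iter n q = some q' ∧ x ∈ T.supp q'
  then T.iter (Nat.find h) q
  else none

/-- `B(q)`: states whose backoff chain contains `q`. -/
def B [Fintype Q] (T : BackoffTopology α Q) (q : Q) : Finset Q :=
  Finset.univ.filter fun qa => ∃ n, T.iter n qa = some q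

/-- `B₁(q)`: states backing off to `q` in one step. -/
def B1 [Fintype Q] (T : BackoffTopology α Q) (q : Q) : Finset Q :=
  Finset.univ.filter fun q₀ => T.bo q₀ = some q

end BackoffTopology

/-- An ε-companion distribution on a backoff-complete topology: `p q x` is `p(x|q)` and
`pphi q` is `p(φ|q)`. -/
structure Companion (T : BackoffTopology α Q) (ε : ℝ) where
  p : Q → α → ℝ
  pphi : Q → ℝ
  p_ge : ∀ q, ∀ x ∈ T.supp q, ε ≤ p q x
  pphi_ge : ∀ q q', T.bo q = some q' → ε ≤ pphi q
  pphi_none : ∀ q, T.bo q = none → pphi q = 0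
  total : ∀ q, (∑ x ∈ T.supp q, p q x) + pphi q = 1

namespace Companion

variable {T : BackoffTopology α Q} {ε : ℝ}

/-- `d(q₀,q) = 1 − Σ_{x∈L[q₀]} p(x|q)`, for `bo q₀ = q`. -/
def d (c : Companion T ε) (q₀ q : Q) : ℝ :=
  1 - ∑ x ∈ T.supp q₀, c.p q x

/-- `alphaN n q = α(q, q″)` where `q″` is the `n`-th state of the backoff chain of `q`:
the product of `p(φ|s)/d(s,bo(s))` over the first `n` states `s` of the chain. -/
def alphaN (c : Companion T ε) : ℕ → Q → ℝ
  | 0, _ => 1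
  | n + 1, q =>
    match T.bo q with
    | none => 1
    | some q' => c.pphi q / c.d q q' * c.alphaN n q'

/-- The induced distribution `p*(x|q) = α(q,q^x)·p(x|q^x)` for `x ∈ L*[q]`, else `0`. -/
def pStar (c : Companion T ε) (q : Q) (x : α) : ℝ :=
  if h : ∃ n, ∃ q', T.iter n q = some q' ∧ x ∈ T.supp q'
  then c.alphaN (Nat.find h) q * c.p ((T.iter (Nat.find h) q).getD q) x
  else 0

end Companion

/-- `C(x,q) = Σ_{q_a ∈ B(q)} c(x,q_a)·1[q_a^x = q]` for `x ∈ Σ`. -/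
def Cx [Fintype Q] (T : BackoffTopology α Q) (c : α → Q → ℝ) (x : α) (q : Q) : ℝ :=
  ∑ qa ∈ T.B q, if T.qx qa x = some q then c x qa else 0

/-- `C(φ,q) = Σ_{q_a ∈ B(q)} Σ_{x ∉ L[q]} c(x,q_a)`. -/
def Cphi [Fintype α] [Fintype Q] (T : BackoffTopology α Q) (c : α → Q → ℝ) (q : Q) : ℝ :=
  ∑ qa ∈ T.B q, ∑ x : α, if x ∈ T.supp q then 0 else c x qa


set_option linter.unusedSectionVars false

namespace BackoffTopology

variable (T : BackoffTopology α Q)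

theorem iter_succ (n : ℕ) (q : Q) : T.iter (n+1) q = (T.iter n q).bind T.bo := rfl

theorem iter_add (m n : ℕ) (q : Q) :
    T.iter (m + n) q = (T.iter m q).bind (T.iter n) := by
  induction n with
  | zero => simp [iter]
  | succ n ih =>
    show T.iter ((m + n) + 1) q = _
    rw [iter_succ, ih]
    cases T.iter m q with
    | none => rfl
    | some q' => simp [iter_succ]

theorem iter_add' {m : ℕ} {q q' : Q} (h : T.iter m q = some q') (n : ℕ) :
    T.iter (m + n) q = T.iter n q' := by rw [iter_add, h]; rfl

theorem iter_some_of_le {n : ℕ} {q q' : Q} (h : T.iter n q = some q') {k : ℕ} (hk : k ≤ n) :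
    ∃ q'', T.iter k q = some q'' := by
  obtain ⟨m, rfl⟩ := Nat.exists_eq_add_of_le hk
  rw [iter_add] at h
  cases hik : T.iter k q with
  | none => rw [hik] at h; simp at h
  | some q'' => exact ⟨q'', rfl⟩

theorem supp_iter_sub : ∀ {n : ℕ} {q q' : Q}, T.iter n q = some q' → T.supp q ⊆ T.supp q' := by
  intro n
  induction n with
  | zero => intro q q' h; cases h; exact Finset.Subset.refl _
  | succ n ih =>
    intro q q' h
    rw [iter_succ] at h
    cases hik : T.iter n q with
    | none => rw [hik] at h; simp at h
    | some q'' =>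
      rw [hik] at h
      exact (ih hik).trans (T.supp_sub _ _ h)

theorem supp_iter_sub' {m n : ℕ} {q a b : Q} (hm : T.iter m q = some a)
    (hn : T.iter n q = some b) (hmn : m ≤ n) : T.supp a ⊆ T.supp b := by
  obtain ⟨k, rfl⟩ := Nat.exists_eq_add_of_le hmn
  rw [T.iter_add' hm] at hn
  exact T.supp_iter_sub hn

theorem rank_iter : ∀ {n : ℕ} {q q' : Q}, T.iter n q = some q' → T.rank q' + n ≤ T.rank q := by
  intro n
  induction n with
  | zero => intro q q' h; cases h; simp
  | succ n ih =>
    intro q q' h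
    rw [iter_succ] at h
    cases hik : T.iter n q with
    | none => rw [hik] at h; simp at h
    | some q'' =>
      rw [hik] at h
      have := ih hik
      have := T.rank_lt _ _ h
      omega

theorem iter_inj {m n : ℕ} {q a : Q} (hm : T.iter m q = some a) (hn : T.iter n q = some a) :
    m = n := by
  by_contra hne
  wlog h : m < n generalizing m n
  · exact this hn hm (Ne.symm hne) (by omega)
  obtain ⟨k, hk⟩ := Nat.exists_eq_add_of_lt h
  subst hk
  rw [show m + k + 1 = m + (k+1) by omega, T.iter_add' hm] at hn
  have := T.rank_iter hn
  omega

theorem iter_succ_front (n : ℕ) (q : Q) : T.iter (n+1) q = (T.bo q).bind (T.iter n) := by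
  have : T.iter (1 + n) q = (T.iter 1 q).bind (T.iter n) := T.iter_add 1 n q
  rw [Nat.add_comm] at this
  rw [this]
  rfl

end BackoffTopology

namespace Companion

variable {T : BackoffTopology α Q} {ε : ℝ}

variable (hε : 0 < ε) (p : Companion T ε)
include hε

theorem d_ge {q₀ q : Q} (h : T.bo q₀ = some q) : ε ≤ p.d q₀ q := by
  have hsub : T.supp q₀ ⊆ T.supp q := T.supp_sub _ _ h
  have hsplit : ∑ x ∈ T.supp q, p.p q x
      = (∑ x ∈ T.supp q₀, p.p q x) + ∑ x ∈ T.supp q \ T.supp q₀, p.p q x :=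
    (Finset.sum_sdiff hsub).symm.trans (by ring)
  have htot := p.total q
  have hd : p.d q₀ q = (∑ x ∈ T.supp q \ T.supp q₀, p.p q x) + p.pphi q := by
    unfold d; rw [hsplit] at htot; linarith
  rw [hd]
  have hnnd : ∀ x ∈ T.supp q \ T.supp q₀, 0 ≤ p.p q x := fun x hx =>
    le_of_lt (lt_of_lt_of_le hε (p.p_ge q x (Finset.mem_sdiff.mp hx).1))
  cases hbq : T.bo q with
  | some q' =>
    have := p.pphi_ge q q' hbq
    have := Finset.sum_nonneg hnnd
    linarith
  | none =>
    have hss := T.supp_ssub _ _ h hbq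
    obtain ⟨x, hxq, hxq0⟩ := Finset.exists_of_ssubset hss
    have hxmem : x ∈ T.supp q \ T.supp q₀ := Finset.mem_sdiff.mpr ⟨hxq, hxq0⟩
    have h1 : ε ≤ ∑ y ∈ T.supp q \ T.supp q₀, p.p q y :=
      le_trans (p.p_ge q x hxq) (Finset.single_le_sum hnnd hxmem)
    have := p.pphi_none q hbq
    linarith

theorem d_pos {q₀ q : Q} (h : T.bo q₀ = some q) : 0 < p.d q₀ q :=
  lt_of_lt_of_le hε (p.d_ge hε h)

theorem alphaN_pos : ∀ {n : ℕ} {q q' : Q}, T.iter n q = some q' → 0 < p.alphaN n q := by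
  intro n
  induction n with
  | zero => intro q q' _; exact one_pos
  | succ n ih =>
    intro q q' h
    rw [T.iter_succ_front] at h
    cases hb : T.bo q with
    | none => rw [hb] at h; simp at h
    | some q₁ =>
      rw [hb] at h
      replace h : T.iter n q₁ = some q' := h
      have halpha : p.alphaN (n+1) q = p.pphi q / p.d q q₁ * p.alphaN n q₁ := by
        show (match T.bo q with
          | none => 1
          | some q'' => p.pphi q / p.d q q'' * p.alphaN n q'') = _
        rw [hb]
      rw [halpha]
      exact mul_pos (div_pos (lt_of_lt_of_le hε (p.pphi_ge q q₁ hb)) (p.d_pos hε hb)) (ih h)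

theorem log_alphaN : ∀ {n : ℕ} {q q' : Q}, T.iter n q = some q' →
    Real.log (p.alphaN n q) = ∑ k ∈ Finset.range n,
      (Real.log (p.pphi ((T.iter k q).getD q))
        - Real.log (p.d ((T.iter k q).getD q) ((T.iter (k+1) q).getD q))) := by
  intro n
  induction n with
  | zero => intro q q' _; simp [alphaN]
  | succ n ih =>
    intro q q' h
    rw [T.iter_succ_front] at h
    cases hb : T.bo q with
    | none => rw [hb] at h; simp at h
    | some q₁ =>
      rw [hb] at h
      replace h : T.iter n q₁ = some q' := h
      have hstep : ∀ k : ℕ, T.iter (k+1) q = T.iter k q₁ := by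
        intro k
        rw [T.iter_succ_front, hb]
        rfl
      have halpha : p.alphaN (n+1) q = p.pphi q / p.d q q₁ * p.alphaN n q₁ := by
        show (match T.bo q with
          | none => 1
          | some q'' => p.pphi q / p.d q q'' * p.alphaN n q'') = _
        rw [hb]
      rw [halpha, Real.log_mul (ne_of_gt (div_pos (lt_of_lt_of_le hε (p.pphi_ge q q₁ hb))
            (p.d_pos hε hb))) (ne_of_gt (p.alphaN_pos hε h)),
        Real.log_div (ne_of_gt (lt_of_lt_of_le hε (p.pphi_ge q q₁ hb)))
          (ne_of_gt (p.d_pos hε hb)), ih h,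
        Finset.sum_range_succ']
      have h0 : (Real.log (p.pphi ((T.iter 0 q).getD q))
          - Real.log (p.d ((T.iter 0 q).getD q) ((T.iter (0+1) q).getD q)))
          = Real.log (p.pphi q) - Real.log (p.d q q₁) := by
        simp [BackoffTopology.iter, hb]
      have hsum : (∑ k ∈ Finset.range n,
          (Real.log (p.pphi ((T.iter (k+1) q).getD q))
            - Real.log (p.d ((T.iter (k+1) q).getD q) ((T.iter (k+1+1) q).getD q))))
          = ∑ k ∈ Finset.range n,
          (Real.log (p.pphi ((T.iter k q₁).getD q₁))
            - Real.log (p.d ((T.iter k q₁).getD q₁) ((T.iter (k+1) q₁).getD q₁))) := by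
        apply Finset.sum_congr rfl
        intro k hk
        have hk' := Finset.mem_range.mp hk
        obtain ⟨a, ha⟩ := T.iter_some_of_le h (Nat.le_of_lt hk')
        obtain ⟨b, hbb⟩ := T.iter_some_of_le h hk'
        rw [hstep k, hstep (k+1), ha, hbb]
        rfl
      rw [hsum, h0]
      ring

theorem log_pStar {qa : Q} {x : α}
    (h : ∃ n, ∃ q', T.iter n qa = some q' ∧ x ∈ T.supp q') :
    Real.log (p.pStar qa x)
      = Real.log (p.p ((T.iter (Nat.find h) qa).getD qa) x)
        + ∑ k ∈ Finset.range (Nat.find h),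
          (Real.log (p.pphi ((T.iter k qa).getD qa))
            - Real.log (p.d ((T.iter k qa).getD qa) ((T.iter (k+1) qa).getD qa))) := by
  obtain ⟨q', hit, hx⟩ := Nat.find_spec h
  have hppos : 0 < p.p ((T.iter (Nat.find h) qa).getD qa) x := by
    rw [hit]
    exact lt_of_lt_of_le hε (p.p_ge q' x hx)
  unfold pStar
  rw [dif_pos h,
    Real.log_mul (ne_of_gt (p.alphaN_pos hε hit)) (ne_of_gt hppos),
    p.log_alphaN hε hit]
  ring

end Companion

section Main

variable [Fintype α] [Fintype Q] (T : BackoffTopology α Q)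
  {ε : ℝ} (p : Companion T ε) (c : α → Q → ℝ)

/-- the per-state weight for the φ-accounting -/
noncomputable def wgt : Q → ℝ := fun q =>
  Real.log (p.pphi q) - (T.bo q).elim 0 (fun q' => Real.log (p.d q q'))

/-- membership of a state in the strict pre-`q^x` segment of the chain -/
theorem chain_seg_iff {qa : Q} {x : α}
    (h : ∃ n, ∃ q', T.iter n qa = some q' ∧ x ∈ T.supp q') (q : Q) :
    ((∃ n, T.iter n qa = some q) ∧ x ∉ T.supp q)
      ↔ ∃ k < Nat.find h, T.iter k qa = some q := by
  obtain ⟨q', hit, hx⟩ := Nat.find_spec h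
  constructor
  · rintro ⟨⟨n, hn⟩, hxn⟩
    refine ⟨n, ?_, hn⟩
    by_contra hge
    push_neg at hge
    exact hxn (T.supp_iter_sub' hit hn hge hx)
  · rintro ⟨k, hk, hkq⟩
    refine ⟨⟨k, hkq⟩, fun hxk => ?_⟩
    exact Nat.find_min h hk ⟨q, hkq, hxk⟩

theorem S_eq {qa : Q} {x : α}
    (h : ∃ n, ∃ q', T.iter n qa = some q' ∧ x ∈ T.supp q') :
    (∑ q : Q, if (∃ n, T.iter n qa = some q) ∧ x ∉ T.supp q then wgt T p q else 0)
      = ∑ k ∈ Finset.range (Nat.find h),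
          (Real.log (p.pphi ((T.iter k qa).getD qa))
            - Real.log (p.d ((T.iter k qa).getD qa) ((T.iter (k+1) qa).getD qa))) := by
  obtain ⟨q', hit, hx⟩ := Nat.find_spec h
  rw [← Finset.sum_filter]
  refine (Finset.sum_bij (fun k _ => (T.iter k qa).getD qa) ?_ ?_ ?_ ?_).symm
  · intro k hk
    have hk' := Finset.mem_range.mp hk
    obtain ⟨a, ha⟩ := T.iter_some_of_le hit (Nat.le_of_lt hk')
    rw [Finset.mem_filter]
    refine ⟨Finset.mem_univ _, (chain_seg_iff T h _).mpr ⟨k, hk', ?_⟩⟩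
    simp [ha]
  · intro k₁ hk₁ k₂ hk₂ heq
    obtain ⟨a₁, ha₁⟩ := T.iter_some_of_le hit (Nat.le_of_lt (Finset.mem_range.mp hk₁))
    obtain ⟨a₂, ha₂⟩ := T.iter_some_of_le hit (Nat.le_of_lt (Finset.mem_range.mp hk₂))
    simp only [ha₁, ha₂, Option.getD_some] at heq
    subst heq
    exact T.iter_inj ha₁ ha₂
  · intro q hq
    rw [Finset.mem_filter] at hq
    obtain ⟨k, hk, hkq⟩ := (chain_seg_iff T h _).mp hq.2
    exact ⟨k, Finset.mem_range.mpr hk, by simp [hkq]⟩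
  · intro k hk
    have hk' := Finset.mem_range.mp hk
    obtain ⟨a, ha⟩ := T.iter_some_of_le hit (Nat.le_of_lt hk')
    obtain ⟨b, hbb⟩ := T.iter_some_of_le hit hk'
    have hbo : T.bo a = some b := by
      have : T.iter (k+1) qa = (T.iter k qa).bind T.bo := rfl
      rw [this, ha] at hbb
      exact hbb
    simp only [wgt, ha, hbb, Option.getD_some, hbo, Option.elim]

theorem loglik_decomposition' (hε : 0 < ε) (hc_supp : ∀ x q, x ∉ T.suppStar q → c x q = 0) :
    ∑ q : Q, ∑ x ∈ Finset.univ.filter (fun x : α => x ∈ T.suppStar q),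
        c x q * Real.log (p.pStar q x)
      = ∑ q : Q,
          ((∑ x ∈ T.supp q, Cx T c x q * Real.log (p.p q x))
            + Cphi T c q * Real.log (p.pphi q)
            - ∑ q₀ ∈ T.B1 q, Cphi T c q₀ * Real.log (p.d q₀ q)) := by
  classical
  -- Step 1: first RHS term
  have hT1 : ∑ q : Q, ∑ x ∈ T.supp q, Cx T c x q * Real.log (p.p q x)
      = ∑ qa : Q, ∑ x : α,
          (T.qx qa x).elim 0 (fun q0 => c x qa * Real.log (p.p q0 x)) := by
    have step1 : ∀ q : Q, ∑ x ∈ T.supp q, Cx T c x q * Real.log (p.p q x)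
        = ∑ x : α, ∑ qa : Q,
            if T.qx qa x = some q then c x qa * Real.log (p.p q x) else 0 := by
      intro q
      rw [← Finset.sum_subset (Finset.subset_univ (T.supp q))]
      · apply Finset.sum_congr rfl
        intro x _
        rw [Cx, Finset.sum_mul, BackoffTopology.B, ← Finset.sum_filter_add_sum_filter_not
            Finset.univ (fun qa => ∃ n, T.iter n qa = some q)]
        have hz : ∑ qa ∈ Finset.univ.filter
            (fun qa => ¬∃ n, T.iter n qa = some q),
            (if T.qx qa x = some q then c x qa * Real.log (p.p q x) else 0) = 0 := by
          apply Finset.sum_eq_zero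
          intro qa hqa
          rw [Finset.mem_filter] at hqa
          rw [if_neg]
          intro hqx
          apply hqa.2
          rw [BackoffTopology.qx] at hqx
          split at hqx
          · next hex => exact ⟨Nat.find hex, hqx⟩
          · exact absurd hqx (by simp)
        rw [hz, add_zero]
        apply Finset.sum_congr rfl
        intro qa _
        rw [ite_mul, zero_mul]
      · intro x _ hx
        apply Finset.sum_eq_zero
        intro qa _
        rw [if_neg]
        intro hqx
        apply hx
        rw [BackoffTopology.qx] at hqx
        split at hqx
        · next hex =>
          obtain ⟨q', hq', hxq'⟩ := Nat.find_spec hex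
          rw [hq'] at hqx
          cases hqx
          exact hxq'
        · exact absurd hqx (by simp)
    calc ∑ q : Q, ∑ x ∈ T.supp q, Cx T c x q * Real.log (p.p q x)
        = ∑ q : Q, ∑ x : α, ∑ qa : Q,
            (if T.qx qa x = some q then c x qa * Real.log (p.p q x) else 0) :=
          Finset.sum_congr rfl (fun q _ => step1 q)
      _ = ∑ q : Q, ∑ qa : Q, ∑ x : α,
            (if T.qx qa x = some q then c x qa * Real.log (p.p q x) else 0) :=
          Finset.sum_congr rfl (fun q _ => Finset.sum_comm)
      _ = ∑ qa : Q, ∑ q : Q, ∑ x : α,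
            (if T.qx qa x = some q then c x qa * Real.log (p.p q x) else 0) :=
          Finset.sum_comm
      _ = ∑ qa : Q, ∑ x : α, ∑ q : Q,
            (if T.qx qa x = some q then c x qa * Real.log (p.p q x) else 0) :=
          Finset.sum_congr rfl (fun qa _ => Finset.sum_comm)
      _ = ∑ qa : Q, ∑ x : α,
            (T.qx qa x).elim 0 (fun q0 => c x qa * Real.log (p.p q0 x)) := by
          apply Finset.sum_congr rfl; intro qa _
          apply Finset.sum_congr rfl; intro x _
          cases hqx : T.qx qa x with
          | none => simp
          | some q0 => simp [Option.some.injEq]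
  -- Step 2: middle terms
  have hT2 : ∑ q : Q, (Cphi T c q * Real.log (p.pphi q)
        - ∑ q₀ ∈ T.B1 q, Cphi T c q₀ * Real.log (p.d q₀ q))
      = ∑ q : Q, Cphi T c q * wgt T p q := by
    rw [Finset.sum_sub_distrib]
    have h3 : ∑ q : Q, ∑ q₀ ∈ T.B1 q, Cphi T c q₀ * Real.log (p.d q₀ q)
        = ∑ q₀ : Q, Cphi T c q₀ * (T.bo q₀).elim 0 (fun q' => Real.log (p.d q₀ q')) := by
      have : ∀ q : Q, ∑ q₀ ∈ T.B1 q, Cphi T c q₀ * Real.log (p.d q₀ q)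
          = ∑ q₀ : Q, if T.bo q₀ = some q then Cphi T c q₀ * Real.log (p.d q₀ q) else 0 := by
        intro q
        rw [BackoffTopology.B1, Finset.sum_filter]
      rw [Finset.sum_congr rfl (fun q _ => this q), Finset.sum_comm]
      apply Finset.sum_congr rfl
      intro q₀ _
      cases hb : T.bo q₀ with
      | none => simp
      | some q' => simp [Option.some.injEq]
    rw [h3, ← Finset.sum_sub_distrib]
    apply Finset.sum_congr rfl
    intro q _
    rw [wgt]
    ring
  -- Step 3: middle as pair sum
  have hT3 : ∑ q : Q, Cphi T c q * wgt T p q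
      = ∑ qa : Q, ∑ x : α, c x qa *
          (∑ q : Q, if (∃ n, T.iter n qa = some q) ∧ x ∉ T.supp q then wgt T p q else 0) := by
    have step : ∀ q : Q, Cphi T c q * wgt T p q
        = ∑ qa : Q, ∑ x : α,
            (if (∃ n, T.iter n qa = some q) ∧ x ∉ T.supp q
              then c x qa * wgt T p q else 0) := by
      intro q
      rw [Cphi, Finset.sum_mul, BackoffTopology.B, Finset.sum_filter]
      apply Finset.sum_congr rfl
      intro qa _
      by_cases hqa : ∃ n, T.iter n qa = some q
      · rw [if_pos hqa, Finset.sum_mul]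
        apply Finset.sum_congr rfl
        intro x _
        by_cases hx : x ∈ T.supp q
        · rw [if_pos hx, if_neg (fun hc' => hc'.2 hx), zero_mul]
        · rw [if_neg hx, if_pos ⟨hqa, hx⟩]
      · rw [if_neg hqa]
        symm
        apply Finset.sum_eq_zero
        intro x _
        rw [if_neg (fun hc' => hqa hc'.1)]
    calc ∑ q : Q, Cphi T c q * wgt T p q
        = ∑ q : Q, ∑ qa : Q, ∑ x : α,
            (if (∃ n, T.iter n qa = some q) ∧ x ∉ T.supp q
              then c x qa * wgt T p q else 0) :=
          Finset.sum_congr rfl (fun q _ => step q)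
      _ = ∑ q : Q, ∑ qa : Q, ∑ x : α,
            (if (∃ n, T.iter n qa = some q) ∧ x ∉ T.supp q
              then c x qa * wgt T p q else 0) := rfl
      _ = ∑ qa : Q, ∑ q : Q, ∑ x : α,
            (if (∃ n, T.iter n qa = some q) ∧ x ∉ T.supp q
              then c x qa * wgt T p q else 0) :=
          Finset.sum_comm
      _ = ∑ qa : Q, ∑ x : α, ∑ q : Q,
            (if (∃ n, T.iter n qa = some q) ∧ x ∉ T.supp q
              then c x qa * wgt T p q else 0) :=
          Finset.sum_congr rfl (fun qa _ => Finset.sum_comm)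
      _ = _ := by
          apply Finset.sum_congr rfl; intro qa _
          apply Finset.sum_congr rfl; intro x _
          rw [Finset.mul_sum]
          apply Finset.sum_congr rfl
          intro q _
          rw [mul_ite, mul_zero]
  -- Step 4: LHS as pair sum
  have hLHS : ∑ q : Q, ∑ x ∈ Finset.univ.filter (fun x : α => x ∈ T.suppStar q),
        c x q * Real.log (p.pStar q x)
      = ∑ qa : Q, ∑ x : α,
          (if x ∈ T.suppStar qa then c x qa * Real.log (p.pStar qa x) else 0) := by
    apply Finset.sum_congr rfl
    intro qa _
    rw [Finset.sum_filter]
  -- Put together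
  have hsplit : ∀ q : Q,
      ((∑ x ∈ T.supp q, Cx T c x q * Real.log (p.p q x))
        + Cphi T c q * Real.log (p.pphi q)
        - ∑ q₀ ∈ T.B1 q, Cphi T c q₀ * Real.log (p.d q₀ q))
      = (∑ x ∈ T.supp q, Cx T c x q * Real.log (p.p q x))
        + (Cphi T c q * Real.log (p.pphi q)
          - ∑ q₀ ∈ T.B1 q, Cphi T c q₀ * Real.log (p.d q₀ q)) := fun q => by ring
  rw [hLHS, Finset.sum_congr rfl (fun q _ => hsplit q), Finset.sum_add_distrib,
    hT1, hT2, hT3, ← Finset.sum_add_distrib]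
  apply Finset.sum_congr rfl
  intro qa _
  rw [← Finset.sum_add_distrib]
  apply Finset.sum_congr rfl
  intro x _
  by_cases h : ∃ n, ∃ q', T.iter n qa = some q' ∧ x ∈ T.supp q'
  · have hmem : x ∈ T.suppStar qa := by
      obtain ⟨n, q', hn, hx⟩ := h
      exact ⟨n, q', hn, hx⟩
    rw [if_pos hmem]
    obtain ⟨q', hit, hx⟩ := Nat.find_spec h
    have hqx : T.qx qa x = some q' := by
      rw [BackoffTopology.qx, dif_pos h, hit]
    rw [hqx]
    simp only [Option.elim]
    rw [S_eq T p h, p.log_pStar hε h, hit]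
    simp only [Option.getD_some]
    ring
  · have hnmem : x ∉ T.suppStar qa := by
      intro hmem
      obtain ⟨n, q', hn, hx⟩ := hmem
      exact h ⟨n, q', hn, hx⟩
    have hc0 : c x qa = 0 := hc_supp x qa hnmem
    have hqx : T.qx qa x = none := by rw [BackoffTopology.qx, dif_neg h]
    rw [if_neg hnmem, hqx, hc0]
    simp

end Main

/-- The expected log-likelihood of an ε-companion's induced distribution
under nonnegative counts `c` (supported on `L*`) decomposes state-by-state in terms of the
aggregated counts `C(x,q)`, `C(φ,q)` and the denominators `d(q₀,q)`. -/
theorem loglik_decomposition [Fintype α] [Fintype Q] (T : BackoffTopology α Q)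
    {ε : ℝ} (hε : 0 < ε) (p : Companion T ε) (c : α → Q → ℝ)
    (hc_nonneg : ∀ x q, 0 ≤ c x q)
    (hc_supp : ∀ x q, x ∉ T.suppStar q → c x q = 0) :
    ∑ q : Q, ∑ x ∈ Finset.univ.filter (fun x : α => x ∈ T.suppStar q),
        c x q * Real.log (p.pStar q x)
      = ∑ q : Q,
          ((∑ x ∈ T.supp q, Cx T c x q * Real.log (p.p q x))
            + Cphi T c q * Real.log (p.pphi q)
            - ∑ q₀ ∈ T.B1 q, Cphi T c q₀ * Real.log (p.d q₀ q)) := by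
  exact loglik_decomposition' T p c hε hc_supp

end
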